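/- Let d ≥ 1, k > 1, and let f : ℝ^d → ℝ be three times continuously differentiable with ‖D³f(x)‖ ≤ M for all x ∈ ℝ^d. Then there exists a constant C (depending only on k and M) such that for every θ ∈ ℝ^d, every unit vector w ∈ ℝ^d, and every c > 0, | f(θ) − ( −f(θ + k c w) + k² f(θ + c w) + k² f(θ − c w) − f(θ − k c w) ) / ( 2(k² − 1) ) | ≤ C c³. -/

import Mathlib

open Set

variable {E : Type*} [NormedAddCommGroup E] [NormedSpace ℝ E]
variable {F : Type*} [NormedAddCommGroup F] [NormedSpace ℝ F]

/-- fderiv commutes with translation on the right. -/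
lemma fderiv_translate (G : E → F) (θ x : E) :
    fderiv ℝ (fun y => G (θ + y)) x = fderiv ℝ G (θ + x) := by
  by_cases h : DifferentiableAt ℝ G (θ + x)
  · have h1 : HasFDerivAt (fun y : E => θ + y) (ContinuousLinearMap.id ℝ E) x := by
      simpa using (hasFDerivAt_id x).const_add θ
    have := (h.hasFDerivAt.comp x h1).fderiv
    rw [ContinuousLinearMap.comp_id] at this; exact this
  · rw [fderiv_zero_of_not_differentiableAt h, fderiv_zero_of_not_differentiableAt]
    intro hcontra
    have h2 : DifferentiableAt ℝ (fun z : E => z - θ) (θ + x) :=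
      differentiableAt_id.sub_const θ
    have h3 : DifferentiableAt ℝ (fun y => G (θ + y)) ((fun z : E => z - θ) (θ + x)) := by
      simpa using hcontra
    have h4 := h3.comp (θ + x) h2
    exact h (by simpa [Function.comp_def] using h4)

/-- iterated fderiv commutes with translation on the right. -/
lemma iteratedFDeriv_translate (G : E → F) (θ : E) (n : ℕ) (x : E) :
    iteratedFDeriv ℝ n (fun y => G (θ + y)) x = iteratedFDeriv ℝ n G (θ + x) := by
  induction n generalizing x with
  | zero => ext1; simp
  | succ n IH =>
    rw [iteratedFDeriv_succ_eq_comp_left, iteratedFDeriv_succ_eq_comp_left]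
    have heq : (iteratedFDeriv ℝ n fun y => G (θ + y))
        = fun y => iteratedFDeriv ℝ n G (θ + y) := funext IH
    simp only [Function.comp]
    rw [heq, fderiv_translate (iteratedFDeriv ℝ n G) θ x]

/-- Iterated derivative within an Icc equals global iterated derivative for C^n functions. -/
lemma iteratedDerivWithin_Icc_eq {g : ℝ → ℝ} {n : ℕ} (hg : ContDiff ℝ (n : ℕ∞) g)
    {a b : ℝ} (hab : a < b) {m : ℕ} (hm : m ≤ n) {y : ℝ} (hy : y ∈ Icc a b) :
    iteratedDerivWithin m g (Icc a b) y = iteratedDeriv m g y := by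
  rw [iteratedDerivWithin_eq_iteratedFDerivWithin, iteratedDeriv_eq_iteratedFDeriv]
  congr 1
  have h := (contDiff_iff_ftaylorSeries.mp hg).hasFTaylorSeriesUpToOn (Icc a b)
  exact (h.eq_iteratedFDerivWithin_of_uniqueDiffOn (by exact_mod_cast hm)
    (uniqueDiffOn_Icc hab) hy).symm

/-- Third-order Taylor estimate at 0 for nonnegative t. -/
lemma taylor3 {g : ℝ → ℝ} (hg : ContDiff ℝ 3 g) {M : ℝ}
    (hM : ∀ t : ℝ, |iteratedDeriv 3 g t| ≤ M) {t : ℝ} (ht : 0 ≤ t) :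
    |g t - (g 0 + t * deriv g 0 + t ^ 2 / 2 * iteratedDeriv 2 g 0)| ≤ M * t ^ 3 / 2 := by
  rcases ht.eq_or_lt with rfl | ht'
  · simp
  have h3 : ContDiffOn ℝ ((2 : ℕ) + 1 : ℕ) g (Icc 0 t) := by
    exact_mod_cast hg.contDiffOn
  have hb := taylor_mean_remainder_bound (n := 2) (a := 0) (b := t) (x := t) (C := M)
    ht h3 (right_mem_Icc.mpr ht) ?_
  · rw [taylor_within_apply] at hb
    have e0 : iteratedDerivWithin 0 g (Icc 0 t) 0 = g 0 :=
      iteratedDerivWithin_Icc_eq (n := 3) hg ht' (by norm_num) (left_mem_Icc.mpr ht)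
    have e1 : iteratedDerivWithin 1 g (Icc 0 t) 0 = deriv g 0 := by
      rw [iteratedDerivWithin_Icc_eq (n := 3) hg ht' (by norm_num) (left_mem_Icc.mpr ht)]
      simp [iteratedDeriv_one]
    have e2 : iteratedDerivWithin 2 g (Icc 0 t) 0 = iteratedDeriv 2 g 0 :=
      iteratedDerivWithin_Icc_eq (n := 3) hg ht' (by norm_num) (left_mem_Icc.mpr ht)
    simp only [Finset.sum_range_succ, Finset.sum_range_zero, e0, e1, e2] at hb
    have harg : (0 : ℝ) + ((Nat.factorial 0 : ℝ))⁻¹ * (t - 0) ^ 0 • g 0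
        = g 0 := by norm_num
    have hexp : g t - (0 + ((Nat.factorial 0 : ℝ))⁻¹ * (t - 0) ^ 0 • g 0
          + ((Nat.factorial 1 : ℝ))⁻¹ * (t - 0) ^ 1 • deriv g 0
          + ((Nat.factorial 2 : ℝ))⁻¹ * (t - 0) ^ 2 • iteratedDeriv 2 g 0)
        = g t - (g 0 + t * deriv g 0 + t ^ 2 / 2 * iteratedDeriv 2 g 0) := by
      simp [Nat.factorial, smul_eq_mul]
      ring
    rw [Real.norm_eq_abs] at hb
    calc |g t - (g 0 + t * deriv g 0 + t ^ 2 / 2 * iteratedDeriv 2 g 0)|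
        ≤ M * (t - 0) ^ (2 + 1) / (Nat.factorial 2 : ℝ) := by
          rw [← hexp]
          convert hb using 3 <;> simp [smul_eq_mul] <;> ring
      _ = M * t ^ 3 / 2 := by norm_num [Nat.factorial]

  · intro y hy
    rw [iteratedDerivWithin_Icc_eq (n := 3) hg ht' (le_refl 3) hy]
    exact (hM y)

set_option maxHeartbeats 1000000 in
theorem stmt_1 (d : ℕ) (hd : 1 ≤ d) (k M : ℝ) (hk : 1 < k)
    (f : EuclideanSpace ℝ (Fin d) → ℝ) (hf : ContDiff ℝ 3 f)
    (hM : ∀ x : EuclideanSpace ℝ (Fin d), ‖iteratedFDeriv ℝ 3 f x‖ ≤ M) :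
    ∃ C : ℝ, ∀ (θ w : EuclideanSpace ℝ (Fin d)) (c : ℝ), ‖w‖ = 1 → 0 < c →
      |f θ -
        (-f (θ + (k * c) • w) + k ^ 2 * f (θ + c • w) + k ^ 2 * f (θ - c • w)
          - f (θ - (k * c) • w)) / (2 * (k ^ 2 - 1))|
        ≤ C * c ^ 3 := by
  have hD : (0 : ℝ) < 2 * (k ^ 2 - 1) := by nlinarith
  refine ⟨M * (k ^ 3 + k ^ 2) / (2 * (k ^ 2 - 1)), fun θ w c hw hc => ?_⟩
  have hM0 : 0 ≤ M := (norm_nonneg _).trans (hM θ)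
  set g : ℝ → ℝ := fun t => f (θ + t • w) with hgdef
  have hinner : ContDiff ℝ 3 (fun t : ℝ => θ + t • w) :=
    contDiff_const.add (contDiff_id.smul contDiff_const)
  have hgC : ContDiff ℝ 3 g := hf.comp hinner
  -- third derivative bound along the line
  have hg3 : ∀ t : ℝ, |iteratedDeriv 3 g t| ≤ M := by
    intro t
    set L := ContinuousLinearMap.toSpanSingleton ℝ w with hL
    have hf2 : ContDiff ℝ 3 (fun x => f (θ + x)) :=
      hf.comp (contDiff_const.add contDiff_id)
    have hcomp : g = (fun x => f (θ + x)) ∘ L := by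
      funext s
      simp [hgdef, hL, ContinuousLinearMap.toSpanSingleton_apply]
    have heq : iteratedFDeriv ℝ 3 g t
        = (iteratedFDeriv ℝ 3 (fun x => f (θ + x)) (L t)).compContinuousLinearMap
            (fun _ => L) := by
      rw [hcomp]
      exact L.iteratedFDeriv_comp_right hf2 t le_rfl
    have hnorm : ‖iteratedFDeriv ℝ 3 g t‖
        ≤ ‖iteratedFDeriv ℝ 3 (fun x => f (θ + x)) (L t)‖ * ∏ _i : Fin 3, ‖L‖ := by
      rw [heq]
      exact ContinuousMultilinearMap.norm_compContinuousLinearMap_le _ _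
    have hLn : ‖L‖ = 1 := by rw [hL, ContinuousLinearMap.norm_toSpanSingleton]; exact hw
    have htrans : iteratedFDeriv ℝ 3 (fun x => f (θ + x)) (L t)
        = iteratedFDeriv ℝ 3 f (θ + L t) := iteratedFDeriv_translate f θ 3 (L t)
    calc |iteratedDeriv 3 g t| = ‖iteratedFDeriv ℝ 3 g t‖ := by
          rw [← Real.norm_eq_abs, norm_iteratedFDeriv_eq_norm_iteratedDeriv]
      _ ≤ ‖iteratedFDeriv ℝ 3 (fun x => f (θ + x)) (L t)‖ * ∏ _i : Fin 3, ‖L‖ := hnorm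
      _ = ‖iteratedFDeriv ℝ 3 f (θ + L t)‖ := by rw [htrans, hLn]; simp
      _ ≤ M := hM _
  set gneg : ℝ → ℝ := fun t => g (-t) with hgnegdef
  have hgnegC : ContDiff ℝ 3 gneg := hgC.comp contDiff_neg
  have hgneg3 : ∀ t : ℝ, |iteratedDeriv 3 gneg t| ≤ M := by
    intro t
    rw [hgnegdef]
    rw [iteratedDeriv_comp_neg 3 g t]
    simpa [abs_mul] using hg3 (-t)
  have hderivneg : deriv gneg 0 = -deriv g 0 := by
    rw [← iteratedDeriv_one, ← iteratedDeriv_one, hgnegdef, iteratedDeriv_comp_neg 1 g 0]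
    simp
  have hderiv2neg : iteratedDeriv 2 gneg 0 = iteratedDeriv 2 g 0 := by
    rw [hgnegdef, iteratedDeriv_comp_neg 2 g 0]
    simp
  have hgneg0 : gneg 0 = g 0 := by simp [hgnegdef]
  have hkc : 0 ≤ k * c := by positivity
  have h1 := taylor3 hgC hg3 hkc
  have h2 := taylor3 hgC hg3 hc.le
  have h3 := taylor3 hgnegC hgneg3 hc.le
  have h4 := taylor3 hgnegC hgneg3 hkc
  rw [hderivneg, hderiv2neg, hgneg0] at h3 h4
  -- rewrite f-values as g-values
  have e1 : f (θ + (k * c) • w) = g (k * c) := rfl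
  have e2 : f (θ + c • w) = g c := rfl
  have e3 : f (θ - c • w) = gneg c := by
    simp only [hgnegdef, hgdef, neg_smul, sub_eq_add_neg]
  have e4 : f (θ - (k * c) • w) = gneg (k * c) := by
    simp only [hgnegdef, hgdef, neg_smul, sub_eq_add_neg]
  have e0 : f θ = g 0 := by simp [hgdef]
  rw [e0, e1, e2, e3, e4]
  set A := g 0
  set B := deriv g 0
  set Q := iteratedDeriv 2 g 0
  set r1 := g (k * c) - (A + k * c * B + (k * c) ^ 2 / 2 * Q) with hr1
  set r2 := g c - (A + c * B + c ^ 2 / 2 * Q) with hr2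
  set r3 := gneg c - (A + c * -B + c ^ 2 / 2 * Q) with hr3
  set r4 := gneg (k * c) - (A + k * c * -B + (k * c) ^ 2 / 2 * Q) with hr4
  have hgoal_eq : A - (-g (k * c) + k ^ 2 * g c + k ^ 2 * gneg c - gneg (k * c))
        / (2 * (k ^ 2 - 1))
      = (r1 - k ^ 2 * r2 - k ^ 2 * r3 + r4) / (2 * (k ^ 2 - 1)) := by
    rw [hr1, hr2, hr3, hr4]
    field_simp [show k ^ 2 - 1 ≠ 0 by nlinarith]
    ring
  rw [hgoal_eq, abs_div, abs_of_pos hD]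
  have hb1 := abs_le.mp h1
  have hb2 := abs_le.mp h2
  have hb3 := abs_le.mp h3
  have hb4 := abs_le.mp h4
  have hk2 : (0 : ℝ) ≤ k ^ 2 := sq_nonneg k
  have hs2u : k ^ 2 * r2 ≤ k ^ 2 * (M * c ^ 3 / 2) :=
    mul_le_mul_of_nonneg_left hb2.2 hk2
  have hs2l : k ^ 2 * -(M * c ^ 3 / 2) ≤ k ^ 2 * r2 :=
    mul_le_mul_of_nonneg_left hb2.1 hk2
  have hs3u : k ^ 2 * r3 ≤ k ^ 2 * (M * c ^ 3 / 2) :=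
    mul_le_mul_of_nonneg_left hb3.2 hk2
  have hs3l : k ^ 2 * -(M * c ^ 3 / 2) ≤ k ^ 2 * r3 :=
    mul_le_mul_of_nonneg_left hb3.1 hk2
  have habs : |r1 - k ^ 2 * r2 - k ^ 2 * r3 + r4|
      ≤ M * (k * c) ^ 3 / 2 + k ^ 2 * (M * c ^ 3 / 2) + k ^ 2 * (M * c ^ 3 / 2)
        + M * (k * c) ^ 3 / 2 := by
    rw [abs_le]
    constructor <;> linarith [hb1.1, hb1.2, hb4.1, hb4.2, hs2u, hs2l, hs3u, hs3l]
  calc |r1 - k ^ 2 * r2 - k ^ 2 * r3 + r4| / (2 * (k ^ 2 - 1))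
      ≤ (M * (k * c) ^ 3 / 2 + k ^ 2 * (M * c ^ 3 / 2) + k ^ 2 * (M * c ^ 3 / 2)
          + M * (k * c) ^ 3 / 2) / (2 * (k ^ 2 - 1)) := by gcongr
    _ = M * (k ^ 3 + k ^ 2) / (2 * (k ^ 2 - 1)) * c ^ 3 := by
        field_simp
        ring
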